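/- Suppose (σ,τ) is a disconnected open interval in the pattern poset. Then for any permutation α, all four intervals (α⊕σ, α⊕τ), (α⊖σ, α⊖τ), (σ⊕α, τ⊕α), and (σ⊖α, τ⊖α) are disconnected. -/

import Mathlib

open scoped Classical

/-- The set of all (finite) permutations, as patterns: a permutation of length `n`
together with its length. -/
abbrev PermPt := Σ n : ℕ, Equiv.Perm (Fin n)

/-- Pattern containment order: `σ` occurs in `τ` if there is a strictly monotone
choice of positions on which `τ` is order-isomorphic to `σ`. -/
def ple (σ τ : PermPt) : Prop :=
  ∃ f : Fin σ.1 → Fin τ.1, StrictMono f ∧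
    ∀ a b : Fin σ.1, σ.2 a ≤ σ.2 b ↔ τ.2 (f a) ≤ τ.2 (f b)

/-- Strict pattern containment. -/
def plt (σ τ : PermPt) : Prop := ple σ τ ∧ ¬ ple τ σ

/-- Direct sum of permutations. -/
def pds {m n : ℕ} (α : Equiv.Perm (Fin m)) (β : Equiv.Perm (Fin n)) :
    Equiv.Perm (Fin (m + n)) :=
  finSumFinEquiv.symm.trans ((Equiv.sumCongr α β).trans finSumFinEquiv)

/-- Skew sum of permutations. -/
def pss {m n : ℕ} (α : Equiv.Perm (Fin m)) (β : Equiv.Perm (Fin n)) :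
    Equiv.Perm (Fin (m + n)) :=
  finSumFinEquiv.symm.trans
    (((Equiv.sumCongr α β).trans (Equiv.sumComm (Fin m) (Fin n))).trans
      (finSumFinEquiv.trans (finCongr (Nat.add_comm n m))))

/-- Direct sum, as an operation on `PermPt`. -/
def pdsP (a b : PermPt) : PermPt := ⟨a.1 + b.1, pds a.2 b.2⟩

/-- Skew sum, as an operation on `PermPt`. -/
def pssP (a b : PermPt) : PermPt := ⟨a.1 + b.1, pss a.2 b.2⟩

/-- The empty permutation. -/
def pempty : PermPt := ⟨0, 1⟩

/-- The permutation `1` of length one. -/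
def pone : PermPt := ⟨1, 1⟩

/-- A permutation is decomposable if it is the direct sum of two nonempty
permutations, i.e. some proper nonempty initial segment of positions is mapped
to the corresponding initial segment of values. -/
def Decomp {n : ℕ} (σ : Equiv.Perm (Fin n)) : Prop :=
  ∃ m : ℕ, 0 < m ∧ m < n ∧ ∀ i : Fin n, (i : ℕ) < m → (σ i : ℕ) < m

/-- Disconnectedness of a set of permutations under pattern containment:
it splits into two nonempty parts with no comparabilities between them. -/
def Disconn (S : Set PermPt) : Prop :=
  ∃ A B : Set PermPt, A ∪ B = S ∧ A.Nonempty ∧ B.Nonempty ∧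
    ∀ x ∈ A, ∀ y ∈ B, ¬ ple x y ∧ ¬ ple y x



-- ## Auxiliary development

-- ### basic ple lemmas

lemma ple_refl (a : PermPt) : ple a a := ⟨id, strictMono_id, fun _ _ => Iff.rfl⟩

lemma ple_trans {a b c : PermPt} (h1 : ple a b) (h2 : ple b c) : ple a c := by
  obtain ⟨f, hf, hcf⟩ := h1
  obtain ⟨g, hg, hcg⟩ := h2
  exact ⟨g ∘ f, hg.comp hf, fun i j => (hcf i j).trans (hcg (f i) (f j))⟩

lemma ple_len {a b : PermPt} (h : ple a b) : a.1 ≤ b.1 := by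
  obtain ⟨f, hf, -⟩ := h
  simpa using Fintype.card_le_of_injective f hf.injective


/-- a strictly monotone map between Fins of equal size is the "identity". -/
lemma strictMono_fin_eq {n n' : ℕ} (f : Fin n → Fin n') (hf : StrictMono f)
    (hn : n' ≤ n) : ∀ i : Fin n, (f i : ℕ) = (i : ℕ) := by
  have hle : ∀ i : Fin n, (i : ℕ) ≤ (f i : ℕ) := by
    intro i
    induction' hi : (i : ℕ) with k ih generalizing i
    · omega
    · have hin := i.2
      have hk : k < n := by omega
      have h2 := hf (show (⟨k, hk⟩ : Fin n) < i from by simp [Fin.lt_def, hi])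
      have h1 := ih ⟨k, hk⟩ rfl
      simp only [Fin.lt_def] at *
      omega
  intro i
  by_contra hne
  have hlt : (i : ℕ) < (f i : ℕ) := lt_of_le_of_ne (hle i) (Ne.symm hne)
  have hlast : ∀ j : Fin n, (i:ℕ) ≤ j → (f i : ℕ) + ((j:ℕ) - (i:ℕ)) ≤ (f j : ℕ) := by
    intro j hj
    induction' hd : ((j:ℕ) - (i:ℕ)) with k ih generalizing j
    · have hji : j = i := Fin.ext (by omega)
      subst hji; omega
    · have hjn := j.2
      have hk : (i:ℕ) + k < n := by omega
      have hjk : ((⟨(i:ℕ)+k, hk⟩ : Fin n) : ℕ) - (i:ℕ) = k := by simp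
      have h1 := ih ⟨(i:ℕ)+k, hk⟩ (by simp) hjk
      have h2 := hf (show (⟨(i:ℕ)+k, hk⟩ : Fin n) < j from by simp only [Fin.lt_def, Fin.val_mk]; omega)
      simp only [Fin.lt_def] at h2
      omega
  have hn1 : 0 < n := Fin.pos i
  have hl := hlast ⟨n-1, by omega⟩ (show (i:ℕ) ≤ n-1 from by have := i.2; omega)
  have hfb : (f ⟨n-1, by omega⟩ : ℕ) < n' := (f _).2
  simp only [Fin.val_mk] at hl
  omega

lemma fin_cast_strictMono {n m : ℕ} (h : n = m) : StrictMono (Fin.cast h) :=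
  fun a b hab => by rw [Fin.lt_def, Fin.coe_cast, Fin.coe_cast]; exact hab

lemma ple_flip {a b : PermPt} (h : ple a b) (hlen : b.1 ≤ a.1) : ple b a := by
  obtain ⟨f, hf, hc⟩ := h
  have heq := strictMono_fin_eq f hf hlen
  have hlen' : b.1 = a.1 := le_antisymm hlen (ple_len ⟨f, hf, hc⟩)
  refine ⟨Fin.cast hlen', fin_cast_strictMono hlen', ?_⟩
  intro i j
  have hfi : f (Fin.cast hlen' i) = i := Fin.ext (by rw [heq, Fin.coe_cast])
  have hfj : f (Fin.cast hlen' j) = j := Fin.ext (by rw [heq, Fin.coe_cast])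
  have hiff := hc (Fin.cast hlen' i) (Fin.cast hlen' j)
  rw [hfi, hfj] at hiff
  exact hiff.symm

def peq (a b : PermPt) : Prop := ple a b ∧ ple b a

lemma peq_refl (a : PermPt) : peq a a := ⟨ple_refl a, ple_refl a⟩
lemma peq_symm {a b : PermPt} (h : peq a b) : peq b a := ⟨h.2, h.1⟩
lemma peq_len {a b : PermPt} (h : peq a b) : a.1 = b.1 := le_antisymm (ple_len h.1) (ple_len h.2)

lemma plt_len {a b : PermPt} (h : plt a b) : a.1 < b.1 := by
  rcases lt_or_eq_of_le (ple_len h.1) with h' | h'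
  · exact h'
  · exact absurd (ple_flip h.1 (le_of_eq h'.symm)) h.2

lemma ple_of_val_eq {a b : PermPt} (h : a.1 = b.1)
    (hv : ∀ (i : Fin a.1) (j : Fin b.1), (i:ℕ) = (j:ℕ) →
      ((a.2 i : Fin a.1) : ℕ) = ((b.2 j : Fin b.1) : ℕ)) :
    ple a b := by
  refine ⟨Fin.cast h, fin_cast_strictMono h, ?_⟩
  intro i j
  rw [Fin.le_def, Fin.le_def, hv i (Fin.cast h i) (Fin.coe_cast _ _).symm,
    hv j (Fin.cast h j) (Fin.coe_cast _ _).symm]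

lemma peq_of_val_eq {a b : PermPt} (h : a.1 = b.1)
    (hv : ∀ (i : Fin a.1) (j : Fin b.1), (i:ℕ) = (j:ℕ) →
      ((a.2 i : Fin a.1) : ℕ) = ((b.2 j : Fin b.1) : ℕ)) :
    peq a b :=
  ⟨ple_of_val_eq h hv, ple_of_val_eq h.symm (fun j i hji => (hv i j hji.symm).symm)⟩

-- ### value formulas for pds / pss

lemma pds_val_lo {m n : ℕ} (p : Equiv.Perm (Fin m)) (q : Equiv.Perm (Fin n))
    (i : Fin (m+n)) (h : (i:ℕ) < m) :
    ((pds p q i : Fin (m+n)) : ℕ) = (p ⟨(i:ℕ), h⟩ : ℕ) := by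
  have hi : i = Fin.castAdd n ⟨(i:ℕ), h⟩ := Fin.ext rfl
  have hs : finSumFinEquiv.symm i = Sum.inl (⟨(i:ℕ), h⟩ : Fin m) := by
    conv_lhs => rw [hi]
    exact finSumFinEquiv_symm_apply_castAdd _
  simp [pds, hs]

lemma pds_val_hi {m n : ℕ} (p : Equiv.Perm (Fin m)) (q : Equiv.Perm (Fin n))
    (i : Fin (m+n)) (h : m ≤ (i:ℕ)) :
    ((pds p q i : Fin (m+n)) : ℕ) = m + (q ⟨(i:ℕ) - m, by omega⟩ : ℕ) := by
  have hin := i.2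
  have hs : finSumFinEquiv.symm i = Sum.inr (⟨(i:ℕ) - m, by omega⟩ : Fin n) := by
    have hi : i = Fin.natAdd m ⟨(i:ℕ) - m, by omega⟩ := Fin.ext (by simp; omega)
    conv_lhs => rw [hi]
    exact finSumFinEquiv_symm_apply_natAdd _
  simp [pds, hs]

lemma pss_val_lo {m n : ℕ} (p : Equiv.Perm (Fin m)) (q : Equiv.Perm (Fin n))
    (i : Fin (m+n)) (h : (i:ℕ) < m) :
    ((pss p q i : Fin (m+n)) : ℕ) = n + (p ⟨(i:ℕ), h⟩ : ℕ) := by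
  have hi : i = Fin.castAdd n ⟨(i:ℕ), h⟩ := Fin.ext rfl
  have hs : finSumFinEquiv.symm i = Sum.inl (⟨(i:ℕ), h⟩ : Fin m) := by
    conv_lhs => rw [hi]
    exact finSumFinEquiv_symm_apply_castAdd _
  simp [pss, hs]
  omega

lemma pss_val_hi {m n : ℕ} (p : Equiv.Perm (Fin m)) (q : Equiv.Perm (Fin n))
    (i : Fin (m+n)) (h : m ≤ (i:ℕ)) :
    ((pss p q i : Fin (m+n)) : ℕ) = (q ⟨(i:ℕ) - m, by omega⟩ : ℕ) := by
  have hin := i.2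
  have hs : finSumFinEquiv.symm i = Sum.inr (⟨(i:ℕ) - m, by omega⟩ : Fin n) := by
    have hi : i = Fin.natAdd m ⟨(i:ℕ) - m, by omega⟩ := Fin.ext (by simp; omega)
    conv_lhs => rw [hi]
    exact finSumFinEquiv_symm_apply_natAdd _
  simp [pss, hs]

-- ### ℕ-level interface

/-- value of a pattern at an ℕ position (junk outside range). -/
def pval (a : PermPt) (i : ℕ) : ℕ :=
  if h : i < a.1 then ((a.2 ⟨i, h⟩ : Fin a.1) : ℕ) else a.1

lemma pval_eq (a : PermPt) (i : Fin a.1) : pval a i = ((a.2 i : Fin a.1) : ℕ) := by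
  simp [pval, i.2]

lemma pval_lt {a : PermPt} {i : ℕ} (h : i < a.1) : pval a i < a.1 := by
  simp only [pval, dif_pos h]
  exact (a.2 ⟨i, h⟩).2

lemma pval_inj {a : PermPt} {i j : ℕ} (hi : i < a.1) (hj : j < a.1)
    (h : pval a i = pval a j) : i = j := by
  simp only [pval, dif_pos hi, dif_pos hj] at h
  have := a.2.injective (Fin.ext h)
  simpa using congrArg Fin.val this

lemma ple_of_pval {a b : PermPt} (F : ℕ → ℕ)
    (hFb : ∀ i, i < a.1 → F i < b.1)
    (hmono : ∀ i j, i < j → j < a.1 → F i < F j)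
    (hiff : ∀ i j, i < a.1 → j < a.1 →
      (pval a i ≤ pval a j ↔ pval b (F i) ≤ pval b (F j))) :
    ple a b := by
  refine ⟨fun i => ⟨F i, hFb i i.2⟩, ?_, ?_⟩
  · intro i j hij
    exact Fin.mk_lt_mk.mpr (hmono i j (Fin.lt_def.mp hij) j.2)
  · intro i j
    have := hiff i j i.2 j.2
    rw [pval_eq, pval_eq] at this
    have eb1 : pval b (F i) = ((b.2 ⟨F i, hFb i i.2⟩ : Fin b.1) : ℕ) := by
      simp [pval, hFb i i.2]
    have eb2 : pval b (F j) = ((b.2 ⟨F j, hFb j j.2⟩ : Fin b.1) : ℕ) := by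
      simp [pval, hFb j j.2]
    rw [eb1, eb2] at this
    rw [Fin.le_def, Fin.le_def]
    exact this

lemma ple_elim {a b : PermPt} (h : ple a b) :
    ∃ F : ℕ → ℕ, (∀ i, i < a.1 → F i < b.1) ∧
      (∀ i j, i < j → j < a.1 → F i < F j) ∧
      (∀ i j, i < a.1 → j < a.1 →
        (pval a i ≤ pval a j ↔ pval b (F i) ≤ pval b (F j))) := by
  obtain ⟨f, hf, hc⟩ := h
  refine ⟨fun i => if h : i < a.1 then ((f ⟨i, h⟩ : Fin b.1) : ℕ) else b.1, ?_, ?_, ?_⟩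
  · intro i hi; simp only [dif_pos hi]; exact (f ⟨i, hi⟩).2
  · intro i j hij hj
    have hi : i < a.1 := lt_trans hij hj
    simp only [dif_pos hi, dif_pos hj]
    exact Fin.lt_def.mp (hf (Fin.mk_lt_mk.mpr hij))
  · intro i j hi hj
    simp only [dif_pos hi, dif_pos hj]
    have := hc ⟨i, hi⟩ ⟨j, hj⟩
    rw [Fin.le_def, Fin.le_def] at this
    have e1 : pval a i = ((a.2 ⟨i, hi⟩ : Fin a.1) : ℕ) := by simp [pval, hi]
    have e2 : pval a j = ((a.2 ⟨j, hj⟩ : Fin a.1) : ℕ) := by simp [pval, hj]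
    have e3 : pval b ((f ⟨i, hi⟩ : Fin b.1) : ℕ) = ((b.2 (f ⟨i, hi⟩) : Fin b.1) : ℕ) := by
      have hfb := (f ⟨i, hi⟩).2
      simp [pval, hfb]
    have e4 : pval b ((f ⟨j, hj⟩ : Fin b.1) : ℕ) = ((b.2 (f ⟨j, hj⟩) : Fin b.1) : ℕ) := by
      have hfb := (f ⟨j, hj⟩).2
      simp [pval, hfb]
    rw [e1, e2, e3, e4]
    exact this

lemma peq_of_pval {a b : PermPt} (h : a.1 = b.1)
    (hv : ∀ i, i < a.1 → pval a i = pval b i) : peq a b := by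
  constructor
  · refine ple_of_pval id (fun i hi => h ▸ hi) (fun i j hij _ => hij) ?_
    intro i j hi hj
    rw [hv i hi, hv j hj]
    rfl
  · refine ple_of_pval id (fun i hi => h ▸ hi) (fun i j hij _ => hij) ?_
    intro i j hi hj
    rw [← hv i (h ▸ hi), ← hv j (h ▸ hj)]
    rfl

-- pval formulas for pdsP / pssP

lemma pval_pdsP_lo {a b : PermPt} {i : ℕ} (h : i < a.1) :
    pval (pdsP a b) i = pval a i := by
  have h2 : i < a.1 + b.1 := by omega
  show (if h' : i < (pdsP a b).1 then ((pds a.2 b.2 ⟨i, h'⟩ : Fin (a.1+b.1)) : ℕ) else _) = _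
  rw [dif_pos (show i < (pdsP a b).1 from h2)]
  rw [pds_val_lo a.2 b.2 ⟨i, h2⟩ h]
  simp [pval, h]

lemma pval_pdsP_hi {a b : PermPt} {i : ℕ} (h : a.1 ≤ i) (h2 : i < a.1 + b.1) :
    pval (pdsP a b) i = a.1 + pval b (i - a.1) := by
  show (if h' : i < (pdsP a b).1 then ((pds a.2 b.2 ⟨i, h'⟩ : Fin (a.1+b.1)) : ℕ) else _) = _
  rw [dif_pos (show i < (pdsP a b).1 from h2)]
  rw [pds_val_hi a.2 b.2 ⟨i, h2⟩ h]
  have hs : i - a.1 < b.1 := by omega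
  simp [pval, hs]

lemma pval_pssP_lo {a b : PermPt} {i : ℕ} (h : i < a.1) :
    pval (pssP a b) i = b.1 + pval a i := by
  have h2 : i < a.1 + b.1 := by omega
  show (if h' : i < (pssP a b).1 then ((pss a.2 b.2 ⟨i, h'⟩ : Fin (a.1+b.1)) : ℕ) else _) = _
  rw [dif_pos (show i < (pssP a b).1 from h2)]
  rw [pss_val_lo a.2 b.2 ⟨i, h2⟩ h]
  simp [pval, h]

lemma pval_pssP_hi {a b : PermPt} {i : ℕ} (h : a.1 ≤ i) (h2 : i < a.1 + b.1) :
    pval (pssP a b) i = pval b (i - a.1) := by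
  show (if h' : i < (pssP a b).1 then ((pss a.2 b.2 ⟨i, h'⟩ : Fin (a.1+b.1)) : ℕ) else _) = _
  rw [dif_pos (show i < (pssP a b).1 from h2)]
  rw [pss_val_hi a.2 b.2 ⟨i, h2⟩ h]
  have hs : i - a.1 < b.1 := by omega
  simp [pval, hs]

lemma pdsP_len (a b : PermPt) : (pdsP a b).1 = a.1 + b.1 := rfl

-- ### monotonicity of direct sum

lemma pds_mono {a a' b b' : PermPt} (h1 : ple a a') (h2 : ple b b') :
    ple (pdsP a b) (pdsP a' b') := by
  obtain ⟨F1, hb1, hm1, hi1⟩ := ple_elim h1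
  obtain ⟨F2, hb2, hm2, hi2⟩ := ple_elim h2
  refine ple_of_pval (fun i => if i < a.1 then F1 i else a'.1 + F2 (i - a.1)) ?_ ?_ ?_
  · intro i hi
    rw [pdsP_len] at hi
    rw [pdsP_len]
    by_cases h : i < a.1
    · rw [if_pos h]; have := hb1 i h; omega
    · rw [if_neg h]; have := hb2 (i - a.1) (by omega); omega
  · intro i j hij hj
    rw [pdsP_len] at hj
    by_cases h : j < a.1
    · rw [if_pos (show i < a.1 by omega), if_pos h]; exact hm1 i j hij h
    · rw [if_neg h]
      by_cases h' : i < a.1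
      · rw [if_pos h']; have := hb1 i h'; omega
      · rw [if_neg h']
        have := hm2 (i - a.1) (j - a.1) (by omega) (by omega)
        omega
  · intro i j hi hj
    rw [pdsP_len] at hi hj
    by_cases h : i < a.1 <;> by_cases h' : j < a.1
    · rw [if_pos h, if_pos h', pval_pdsP_lo h, pval_pdsP_lo h',
        pval_pdsP_lo (hb1 i h), pval_pdsP_lo (hb1 j h')]
      exact hi1 i j h h'
    · rw [if_pos h, if_neg h', pval_pdsP_lo h, pval_pdsP_hi (by omega) hj,
        pval_pdsP_lo (hb1 i h),
        pval_pdsP_hi (show a'.1 ≤ a'.1 + F2 (j - a.1) by omega)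
          (by have := hb2 (j - a.1) (by omega); omega)]
      have v1 := pval_lt (show i < a.1 from h)
      have v2 := pval_lt (show F1 i < a'.1 from hb1 i h)
      constructor <;> intro <;> omega
    · rw [if_neg h, if_pos h', pval_pdsP_hi (by omega) hi, pval_pdsP_lo h',
        pval_pdsP_hi (show a'.1 ≤ a'.1 + F2 (i - a.1) by omega)
          (by have := hb2 (i - a.1) (by omega); omega),
        pval_pdsP_lo (hb1 j h')]
      have v1 := pval_lt (show j < a.1 from h')
      have v2 := pval_lt (show F1 j < a'.1 from hb1 j h')
      constructor <;> intro <;> omega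
    · rw [if_neg h, if_neg h', pval_pdsP_hi (by omega) hi, pval_pdsP_hi (by omega) hj,
        pval_pdsP_hi (show a'.1 ≤ a'.1 + F2 (i - a.1) by omega)
          (by have := hb2 (i - a.1) (by omega); omega),
        pval_pdsP_hi (show a'.1 ≤ a'.1 + F2 (j - a.1) by omega)
          (by have := hb2 (j - a.1) (by omega); omega)]
      have := hi2 (i - a.1) (j - a.1) (by omega) (by omega)
      simp only [Nat.add_sub_cancel_left]
      constructor <;> intro hh
      · have := this.mp (by omega); omega
      · have := this.mpr (by omega); omega

-- ### embedding into a direct sum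

lemma ple_pdsP_left (a b : PermPt) : ple a (pdsP a b) := by
  refine ple_of_pval id (fun i hi => by show i < (pdsP a b).1; rw [pdsP_len]; omega) (fun i j hij _ => hij) ?_
  intro i j hi hj
  show pval a i ≤ pval a j ↔ pval (pdsP a b) i ≤ pval (pdsP a b) j
  rw [pval_pdsP_lo hi, pval_pdsP_lo hj]

lemma pone_le {x : PermPt} (hx : 1 ≤ x.1) : ple pone x := by
  refine ple_of_pval (fun _ => 0) (fun i hi => hx) (fun i j hij hj => by
    simp only [pone] at hj; omega) ?_
  intro i j hi hj
  simp only [pone] at hi hj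
  have hi0 : i = 0 := by omega
  have hj0 : j = 0 := by omega
  subst_vars
  exact iff_of_true le_rfl le_rfl

lemma le_pone {x : PermPt} (hx : x.1 = 1) : ple x pone := by
  refine ple_of_pval (fun _ => 0) (fun i hi => Nat.one_pos) (fun i j hij hj => by omega) ?_
  intro i j hi hj
  rw [hx] at hi hj
  have hi0 : i = 0 := by omega
  have hj0 : j = 0 := by omega
  subst_vars
  exact iff_of_true le_rfl le_rfl

lemma pone_len : pone.1 = 1 := rfl

-- ### empty components

lemma peq_pdsP_empty_right {a e : PermPt} (he : e.1 = 0) : peq (pdsP a e) a := by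
  refine peq_of_pval (by rw [pdsP_len]; omega) ?_
  intro i hi
  rw [pdsP_len, he] at hi
  rw [pval_pdsP_lo (by omega)]

lemma peq_pdsP_empty_left {e a : PermPt} (he : e.1 = 0) : peq (pdsP e a) a := by
  refine peq_of_pval (by rw [pdsP_len]; omega) ?_
  intro i hi
  rw [pdsP_len] at hi
  rw [pval_pdsP_hi (by omega) (by omega), he]
  simp

-- ### associativity (up to pattern equivalence)

lemma peq_pdsP_assoc (a b c : PermPt) :
    peq (pdsP (pdsP a b) c) (pdsP a (pdsP b c)) := by
  refine peq_of_pval (by rw [pdsP_len, pdsP_len, pdsP_len, pdsP_len]; omega) ?_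
  intro i hi
  rw [pdsP_len, pdsP_len] at hi
  by_cases h1 : i < a.1
  · rw [pval_pdsP_lo (show i < (pdsP a b).1 by rw [pdsP_len]; omega),
      pval_pdsP_lo h1, pval_pdsP_lo h1]
  · by_cases h2 : i < a.1 + b.1
    · rw [pval_pdsP_lo (show i < (pdsP a b).1 by rw [pdsP_len]; omega),
        pval_pdsP_hi (by omega) h2,
        pval_pdsP_hi (show a.1 ≤ i by omega) (by rw [pdsP_len]; omega),
        pval_pdsP_lo (show i - a.1 < b.1 by omega)]
    · rw [pval_pdsP_hi (show (pdsP a b).1 ≤ i by rw [pdsP_len]; omega)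
          (by rw [pdsP_len]; omega),
        pval_pdsP_hi (show a.1 ≤ i by omega) (by rw [pdsP_len]; omega),
        pval_pdsP_hi (show b.1 ≤ i - a.1 by omega) (by omega),
        pdsP_len, Nat.sub_sub]
      omega

-- ### threshold for a strictly monotone map

lemma threshold {N c : ℕ} (F : ℕ → ℕ) (hmono : ∀ i j, i < j → j < N → F i < F j) :
    ∃ k, k ≤ N ∧ ∀ i, i < N → (F i < c ↔ i < k) := by
  classical
  refine ⟨((Finset.range N).filter (fun i => F i < c)).card,
    le_trans (Finset.card_filter_le _ _) (by simp), ?_⟩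
  intro i hiN
  constructor
  · intro hP
    have hsub : Finset.range (i+1) ⊆ (Finset.range N).filter (fun i => F i < c) := by
      intro j hj
      simp only [Finset.mem_range] at hj
      simp only [Finset.mem_filter, Finset.mem_range]
      refine ⟨by omega, ?_⟩
      rcases lt_or_eq_of_le (Nat.lt_succ_iff.mp hj) with h | h
      · exact lt_trans (hmono j i h hiN) hP
      · subst h; exact hP
    have := Finset.card_le_card hsub
    simp only [Finset.card_range] at this
    omega
  · intro hik
    by_contra hP
    have hsub : (Finset.range N).filter (fun i => F i < c) ⊆ Finset.range i := by
      intro j hj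
      simp only [Finset.mem_filter, Finset.mem_range] at hj
      simp only [Finset.mem_range]
      by_contra hji
      have hij : i ≤ j := by omega
      rcases lt_or_eq_of_le hij with h | h
      · exact hP (lt_trans (hmono i j h hj.1) hj.2)
      · subst h; exact hP hj.2
    have := Finset.card_le_card hsub
    simp only [Finset.card_range] at this
    omega

-- ### master split of a pattern at a position/value cut

lemma pds_split (x : PermPt) (k : ℕ) (hk : k ≤ x.1)
    (H : ∀ i j, i < k → k ≤ j → j < x.1 → pval x i < pval x j) :
    ∃ x1 x2 : PermPt, x1.1 = k ∧ x2.1 = x.1 - k ∧ peq x (pdsP x1 x2) ∧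
      (∀ i, i < k → pval x1 i = pval x i) ∧
      (∀ j, j < x.1 - k → pval x2 j = pval x (k + j) - k) ∧
      (∀ j, k ≤ j → j < x.1 → k ≤ pval x j) := by
  classical
  have hlow : ∀ i, i < k → pval x i < k := by
    intro i hik
    by_contra hge
    push_neg at hge
    have hS : ∀ t, t < x.1 - k → pval x i < pval x (k+t) :=
      fun t ht => H i (k+t) hik (by omega) (by omega)
    have hcard : ((Finset.range (x.1 - k)).image (fun t => pval x (k+t))).card = x.1 - k := by
      rw [Finset.card_image_of_injOn, Finset.card_range]
      intro t1 h1 t2 h2 he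
      simp only [Finset.coe_range, Set.mem_Iio] at h1 h2
      have := pval_inj (a := x) (show k+t1 < x.1 by omega) (show k+t2 < x.1 by omega) he
      omega
    have hsub : ((Finset.range (x.1 - k)).image (fun t => pval x (k+t))) ⊆
        Finset.Ioo (pval x i) x.1 := by
      intro v hv
      simp only [Finset.mem_image, Finset.mem_range] at hv
      obtain ⟨t, ht, rfl⟩ := hv
      simp only [Finset.mem_Ioo]
      exact ⟨hS t ht, pval_lt (by omega)⟩
    have h2 := Finset.card_le_card hsub
    rw [hcard, Nat.card_Ioo] at h2
    have hvi := pval_lt (show i < x.1 by omega)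
    omega
  have hhigh : ∀ j, k ≤ j → j < x.1 → k ≤ pval x j := by
    intro j hkj hj
    by_contra hlt
    push_neg at hlt
    have hni : pval x j ∉ (Finset.range k).image (fun i => pval x i) := by
      simp only [Finset.mem_image, Finset.mem_range]
      rintro ⟨i, hik, he⟩
      have := pval_inj (show i < x.1 by omega) hj he
      omega
    have hcard : (insert (pval x j) ((Finset.range k).image (fun i => pval x i))).card
        = k + 1 := by
      rw [Finset.card_insert_of_notMem hni, Finset.card_image_of_injOn, Finset.card_range]
      intro t1 h1 t2 h2 he
      simp only [Finset.coe_range, Set.mem_Iio] at h1 h2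
      exact pval_inj (by omega) (by omega) he
    have hsub : insert (pval x j) ((Finset.range k).image (fun i => pval x i)) ⊆
        Finset.range k := by
      intro v hv
      simp only [Finset.mem_insert, Finset.mem_image, Finset.mem_range] at hv
      simp only [Finset.mem_range]
      rcases hv with h | ⟨i, hik, rfl⟩
      · omega
      · exact hlow i hik
    have := Finset.card_le_card hsub
    simp only [Finset.card_range] at this
    omega
  have hb1 : ∀ i : Fin k, pval x (i:ℕ) < k := fun i => hlow _ i.2
  have hf1inj : Function.Injective (fun i : Fin k => (⟨pval x (i:ℕ), hb1 i⟩ : Fin k)) := by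
    intro i j he
    have := pval_inj (a := x) (show (i:ℕ) < x.1 by have := i.2; omega)
      (show (j:ℕ) < x.1 by have := j.2; omega) (congrArg Fin.val he)
    exact Fin.ext this
  have hb2 : ∀ j : Fin (x.1 - k), pval x (k+(j:ℕ)) - k < x.1 - k := by
    intro j
    have h1 := pval_lt (a := x) (show k+(j:ℕ) < x.1 by have := j.2; omega)
    have h2 := hhigh (k+(j:ℕ)) (by omega) (by have := j.2; omega)
    omega
  have hf2inj : Function.Injective
      (fun j : Fin (x.1 - k) => (⟨pval x (k+(j:ℕ)) - k, hb2 j⟩ : Fin (x.1 - k))) := by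
    intro i j he
    have he' := congrArg Fin.val he
    simp only at he'
    have hge1 := hhigh (k+(i:ℕ)) (by omega) (by have := i.2; omega)
    have hge2 := hhigh (k+(j:ℕ)) (by omega) (by have := j.2; omega)
    have heq : pval x (k+(i:ℕ)) = pval x (k+(j:ℕ)) := by omega
    have := pval_inj (a := x) (show k+(i:ℕ) < x.1 by have := i.2; omega)
      (show k+(j:ℕ) < x.1 by have := j.2; omega) heq
    exact Fin.ext (by omega)
  set X1 : PermPt := ⟨k, Equiv.ofBijective _ ((Finite.injective_iff_bijective).mp hf1inj)⟩
    with hX1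
  set X2 : PermPt := ⟨x.1 - k, Equiv.ofBijective _ ((Finite.injective_iff_bijective).mp hf2inj)⟩
    with hX2
  have hv1 : ∀ i, i < k → pval X1 i = pval x i := by
    intro i hi
    show (if h : i < X1.1 then ((X1.2 ⟨i, h⟩ : Fin X1.1) : ℕ) else X1.1) = pval x i
    rw [dif_pos (show i < X1.1 from hi)]
    rfl
  have hv2 : ∀ j, j < x.1 - k → pval X2 j = pval x (k + j) - k := by
    intro j hj
    show (if h : j < X2.1 then ((X2.2 ⟨j, h⟩ : Fin X2.1) : ℕ) else X2.1) = _
    rw [dif_pos (show j < X2.1 from hj)]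
    rfl
  have hX1len : X1.1 = k := rfl
  have hX2len : X2.1 = x.1 - k := rfl
  refine ⟨X1, X2, rfl, rfl, ?_, hv1, hv2, hhigh⟩
  refine peq_of_pval (by rw [pdsP_len, hX1len, hX2len]; omega) ?_
  intro i hi
  by_cases h : i < k
  · rw [pval_pdsP_lo (show i < X1.1 from by omega), hv1 i h]
  · rw [pval_pdsP_hi (show X1.1 ≤ i from by omega)
      (show i < X1.1 + X2.1 from by rw [hX1len, hX2len]; omega), hX1len]
    have e1 : pval X2 (i - k) = pval x (k + (i - k)) - k := hv2 _ (by omega)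
    have e2 : k + (i - k) = i := by omega
    rw [e2] at e1
    rw [e1]
    have := hhigh i (by omega) hi
    have hvi := pval_lt (a := x) hi
    omega

-- ### splitting a pattern contained in a direct sum

lemma ple_split {x u v : PermPt} (h : ple x (pdsP u v)) :
    ∃ x1 x2 : PermPt, peq x (pdsP x1 x2) ∧ ple x1 u ∧ ple x2 v := by
  obtain ⟨F, hFb, hFm, hFi⟩ := ple_elim h
  simp only [pdsP_len] at hFb
  obtain ⟨k, hk, hkiff⟩ := threshold (N := x.1) (c := u.1) F hFm
  have H : ∀ i j, i < k → k ≤ j → j < x.1 → pval x i < pval x j := by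
    intro i j hik hkj hj
    have hi : i < x.1 := by omega
    have hPi : F i < u.1 := (hkiff i hi).mpr hik
    have hPj : ¬ F j < u.1 := fun hc => by have := (hkiff j hj).mp hc; omega
    have hFij : F i < F j := by
      rcases lt_or_eq_of_le (show i ≤ j by omega) with h' | h'
      · exact hFm i j h' hj
      · omega
    have hval : pval (pdsP u v) (F i) ≤ pval (pdsP u v) (F j) := by
      rw [pval_pdsP_lo hPi, pval_pdsP_hi (by omega) (hFb j hj)]
      have := pval_lt (a := u) hPi
      omega
    have hle := (hFi i j hi hj).mpr hval
    rcases lt_or_eq_of_le hle with h' | h'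
    · exact h'
    · exact absurd (pval_inj hi hj h') (by omega)
  obtain ⟨x1, x2, hl1, hl2, hpeq, hv1, hv2, hhigh⟩ := pds_split x k hk H
  refine ⟨x1, x2, hpeq, ?_, ?_⟩
  · refine ple_of_pval F (fun i hi => ?_) (fun i j hij hj => hFm i j hij (by omega)) ?_
    · rw [hl1] at hi
      exact (hkiff i (by omega)).mpr hi
    · intro i j hi hj
      rw [hl1] at hi hj
      have hi' : i < x.1 := by omega
      have hj' : j < x.1 := by omega
      have hPi : F i < u.1 := (hkiff i hi').mpr hi
      have hPj : F j < u.1 := (hkiff j hj').mpr hj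
      rw [hv1 i hi, hv1 j hj]
      have := hFi i j hi' hj'
      rw [pval_pdsP_lo hPi, pval_pdsP_lo hPj] at this
      exact this
  · refine ple_of_pval (fun j => F (k + j) - u.1) (fun j hj => ?_) (fun i j hij hj => ?_) ?_
    · rw [hl2] at hj
      have h1 := hFb (k+j) (by omega)
      have h2 : ¬ F (k+j) < u.1 := fun hc => by
        have := (hkiff (k+j) (by omega)).mp hc; omega
      omega
    · rw [hl2] at hj
      have h2 : ¬ F (k+i) < u.1 := fun hc => by
        have := (hkiff (k+i) (by omega)).mp hc; omega
      have := hFm (k+i) (k+j) (by omega) (by omega)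
      omega
    · intro i j hi hj
      rw [hl2] at hi hj
      have hi' : k + i < x.1 := by omega
      have hj' : k + j < x.1 := by omega
      have hPi : ¬ F (k+i) < u.1 := fun hc => by
        have := (hkiff (k+i) hi').mp hc; omega
      have hPj : ¬ F (k+j) < u.1 := fun hc => by
        have := (hkiff (k+j) hj').mp hc; omega
      rw [hv2 i hi, hv2 j hj]
      have hig := hhigh (k+i) (by omega) hi'
      have hjg := hhigh (k+j) (by omega) hj'
      have hiff := hFi (k+i) (k+j) hi' hj'
      rw [pval_pdsP_hi (by omega) (hFb _ hi'), pval_pdsP_hi (by omega) (hFb _ hj')] at hiff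
      constructor
      · intro hle
        have := hiff.mp (by omega)
        omega
      · intro hle
        have := hiff.mpr (by omega)
        omega

-- ### splitting a direct sum contained in a direct sum

lemma ple_pds_split {a b c d : PermPt} (h : ple (pdsP a b) (pdsP c d)) :
    (∃ b1 b2 : PermPt, peq b (pdsP b1 b2) ∧ ple (pdsP a b1) c ∧ ple b2 d) ∨
    (∃ a1 a2 : PermPt, peq a (pdsP a1 a2) ∧ ple a1 c ∧ ple (pdsP a2 b) d) := by
  obtain ⟨F, hFb, hFm, hFi⟩ := ple_elim h
  simp only [pdsP_len] at hFb hFm hFi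
  obtain ⟨k, hk, hkiff⟩ := threshold (N := a.1 + b.1) (c := c.1) F hFm
  -- x-level values
  have hxlo : ∀ i, i < a.1 → pval (pdsP a b) i = pval a i := fun i hi => pval_pdsP_lo hi
  have hxhi : ∀ i, a.1 ≤ i → i < a.1 + b.1 → pval (pdsP a b) i = a.1 + pval b (i - a.1) :=
    fun i h1 h2 => pval_pdsP_hi h1 h2
  have hxlt : ∀ i j, i < k → k ≤ j → j < a.1 + b.1 →
      pval (pdsP a b) i < pval (pdsP a b) j := by
    intro i j hik hkj hj
    have hi : i < a.1 + b.1 := by omega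
    have hPi : F i < c.1 := (hkiff i hi).mpr hik
    have hPj : ¬ F j < c.1 := fun hc => by have := (hkiff j hj).mp hc; omega
    have hval : pval (pdsP c d) (F i) ≤ pval (pdsP c d) (F j) := by
      rw [pval_pdsP_lo hPi, pval_pdsP_hi (by omega) (hFb j hj)]
      have := pval_lt (a := c) hPi
      omega
    have hle := (hFi i j hi hj).mpr hval
    rcases lt_or_eq_of_le hle with h' | h'
    · exact h'
    · exact absurd (pval_inj (a := pdsP a b) (by rw [pdsP_len]; omega)
        (by rw [pdsP_len]; omega) h') (by omega)
  by_cases hka : k ≤ a.1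
  · -- split a at k
    right
    have H : ∀ i j, i < k → k ≤ j → j < a.1 → pval a i < pval a j := by
      intro i j hik hkj hj
      have := hxlt i j hik hkj (by omega)
      rw [hxlo i (by omega), hxlo j hj] at this
      exact this
    obtain ⟨a1, a2, hl1, hl2, hpeq, hv1, hv2, hhigh⟩ := pds_split a k (by omega) H
    refine ⟨a1, a2, hpeq, ?_, ?_⟩
    · -- ple a1 c
      refine ple_of_pval F (fun i hi => ?_) (fun i j hij hj => hFm i j hij (by omega)) ?_
      · rw [hl1] at hi
        exact (hkiff i (by omega)).mpr hi
      · intro i j hi hj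
        rw [hl1] at hi hj
        have hi' : i < a.1 + b.1 := by omega
        have hj' : j < a.1 + b.1 := by omega
        have hPi : F i < c.1 := (hkiff i (by omega)).mpr hi
        have hPj : F j < c.1 := (hkiff j (by omega)).mpr hj
        rw [hv1 i hi, hv1 j hj]
        have hiff := hFi i j hi' hj'
        rw [pval_pdsP_lo hPi, pval_pdsP_lo hPj] at hiff
        rw [hxlo i (by omega), hxlo j (by omega)] at hiff
        exact hiff
    · -- ple (pdsP a2 b) d
      have hlen2 : (pdsP a2 b).1 = (a.1 - k) + b.1 := by rw [pdsP_len, hl2]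
      -- uniform value formula
      have hval : ∀ l, l < (a.1 - k) + b.1 →
          pval (pdsP a2 b) l = pval (pdsP a b) (k + l) - k ∧
          k ≤ pval (pdsP a b) (k + l) := by
        intro l hl
        by_cases h' : l < a.1 - k
        · rw [pval_pdsP_lo (show l < a2.1 from by omega), hv2 l h',
            hxlo (k+l) (by omega)]
          exact ⟨rfl, hhigh (k+l) (by omega) (by omega)⟩
        · rw [pval_pdsP_hi (show a2.1 ≤ l from by omega) (show l < a2.1 + b.1 from by omega),
            hxhi (k+l) (by omega) (by omega), hl2]
          have e : k + l - a.1 = l - (a.1 - k) := by omega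
          rw [e]
          omega
      refine ple_of_pval (fun l => F (k + l) - c.1) (fun l hl => ?_) (fun i j hij hj => ?_) ?_
      · rw [hlen2] at hl
        have h1 := hFb (k+l) (by omega)
        have h2 : ¬ F (k+l) < c.1 := fun hc => by
          have := (hkiff (k+l) (by omega)).mp hc; omega
        omega
      · rw [hlen2] at hj
        have h2 : ¬ F (k+i) < c.1 := fun hc => by
          have := (hkiff (k+i) (by omega)).mp hc; omega
        have := hFm (k+i) (k+j) (by omega) (by omega)
        omega
      · intro i j hi hj
        rw [hlen2] at hi hj
        obtain ⟨e1, g1⟩ := hval i hi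
        obtain ⟨e2, g2⟩ := hval j hj
        rw [e1, e2]
        have hPi : ¬ F (k+i) < c.1 := fun hc => by
          have := (hkiff (k+i) (by omega)).mp hc; omega
        have hPj : ¬ F (k+j) < c.1 := fun hc => by
          have := (hkiff (k+j) (by omega)).mp hc; omega
        have hiff := hFi (k+i) (k+j) (by omega) (by omega)
        rw [pval_pdsP_hi (show c.1 ≤ F (k+i) by omega) (hFb _ (by omega)),
          pval_pdsP_hi (show c.1 ≤ F (k+j) by omega) (hFb _ (by omega))] at hiff
        constructor
        · intro hle
          have := hiff.mp (by omega)
          omega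
        · intro hle
          have := hiff.mpr (by omega)
          omega
  · -- split b at k - a.1
    left
    push_neg at hka
    have H : ∀ i j, i < k - a.1 → k - a.1 ≤ j → j < b.1 → pval b i < pval b j := by
      intro i j hik hkj hj
      have := hxlt (a.1 + i) (a.1 + j) (by omega) (by omega) (by omega)
      rw [hxhi (a.1+i) (by omega) (by omega), hxhi (a.1+j) (by omega) (by omega)] at this
      simp only [Nat.add_sub_cancel_left] at this
      omega
    obtain ⟨b1, b2, hl1, hl2, hpeq, hv1, hv2, hhigh⟩ := pds_split b (k - a.1) (by omega) H
    refine ⟨b1, b2, hpeq, ?_, ?_⟩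
    · -- ple (pdsP a b1) c
      have hlen1 : (pdsP a b1).1 = k := by rw [pdsP_len, hl1]; omega
      have hval : ∀ l, l < k → pval (pdsP a b1) l = pval (pdsP a b) l := by
        intro l hl
        by_cases h' : l < a.1
        · rw [pval_pdsP_lo (show l < a.1 from h'), hxlo l h']
        · rw [pval_pdsP_hi (show a.1 ≤ l from by omega) (show l < a.1 + b1.1 from by omega),
            hxhi l (by omega) (by omega), hv1 (l - a.1) (by omega)]
      refine ple_of_pval F (fun l hl => ?_) (fun i j hij hj => ?_) ?_
      · rw [hlen1] at hl
        exact (hkiff l (by omega)).mpr hl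
      · rw [hlen1] at hj
        exact hFm i j hij (by omega)
      · intro i j hi hj
        rw [hlen1] at hi hj
        rw [hval i hi, hval j hj]
        have hPi : F i < c.1 := (hkiff i (by omega)).mpr hi
        have hPj : F j < c.1 := (hkiff j (by omega)).mpr hj
        have hiff := hFi i j (by omega) (by omega)
        rw [pval_pdsP_lo hPi, pval_pdsP_lo hPj] at hiff
        exact hiff
    · -- ple b2 d
      refine ple_of_pval (fun j => F (k + j) - c.1) (fun j hj => ?_) (fun i j hij hj => ?_) ?_
      · rw [hl2] at hj
        have h1 := hFb (k+j) (by omega)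
        have h2 : ¬ F (k+j) < c.1 := fun hc => by
          have := (hkiff (k+j) (by omega)).mp hc; omega
        omega
      · rw [hl2] at hj
        have h2 : ¬ F (k+i) < c.1 := fun hc => by
          have := (hkiff (k+i) (by omega)).mp hc; omega
        have := hFm (k+i) (k+j) (by omega) (by omega)
        omega
      · intro i j hi hj
        rw [hl2] at hi hj
        rw [hv2 i hi, hv2 j hj]
        have hgi := hhigh ((k - a.1) + i) (by omega) (by omega)
        have hgj := hhigh ((k - a.1) + j) (by omega) (by omega)
        have hPi : ¬ F (k+i) < c.1 := fun hc => by
          have := (hkiff (k+i) (by omega)).mp hc; omega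
        have hPj : ¬ F (k+j) < c.1 := fun hc => by
          have := (hkiff (k+j) (by omega)).mp hc; omega
        have hiff := hFi (k+i) (k+j) (by omega) (by omega)
        rw [pval_pdsP_hi (show c.1 ≤ F (k+i) by omega) (hFb _ (by omega)),
          pval_pdsP_hi (show c.1 ≤ F (k+j) by omega) (hFb _ (by omega)),
          hxhi (k+i) (by omega) (by omega), hxhi (k+j) (by omega) (by omega)] at hiff
        have ei : k + i - a.1 = (k - a.1) + i := by omega
        have ej : k + j - a.1 = (k - a.1) + j := by omega
        rw [ei, ej] at hiff
        constructor
        · intro hle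
          have := hiff.mp (by omega)
          omega
        · intro hle
          have := hiff.mpr (by omega)
          omega

-- ### cancellation

lemma ple_cancel {x y α : PermPt} (h : ple (pdsP x α) (pdsP y α)) : ple x y := by
  rcases ple_pds_split h with ⟨b1, b2, hpeq, h1, h2⟩ | ⟨a1, a2, hpeq, h1, h2⟩
  · exact ple_trans (ple_pdsP_left x b1) h1
  · have hlen : a2.1 + α.1 ≤ α.1 := by
      have := ple_len h2
      rw [pdsP_len] at this
      exact this
    have ha2 : a2.1 = 0 := by omega
    exact ple_trans (ple_trans hpeq.1 (peq_pdsP_empty_right ha2).1) h1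

lemma peq_trans {a b c : PermPt} (h1 : peq a b) (h2 : peq b c) : peq a c :=
  ⟨ple_trans h1.1 h2.1, ple_trans h2.2 h1.2⟩


section CoreAux

variable (σ τ α : PermPt) (X Y : Set PermPt)

lemma core_aux
    (hXY : X ∪ Y = {π | plt σ π ∧ plt π τ})
    (hX : X.Nonempty) (hY : Y.Nonempty)
    (hsep : ∀ x ∈ X, ∀ y ∈ Y, ¬ ple x y ∧ ¬ ple y x)
    (hz : pdsP σ pone ∈ {π : PermPt | plt σ π ∧ plt π τ} → pdsP σ pone ∉ X) :
    Disconn {π | plt (pdsP σ α) π ∧ plt π (pdsP τ α)} := by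
  classical
  set S' : Set PermPt := {π | plt (pdsP σ α) π ∧ plt π (pdsP τ α)} with hS'
  have hmem : ∀ w, w ∈ X ∪ Y → plt σ w ∧ plt w τ := by
    intro w hw; rw [hXY] at hw; exact hw
  have hmemX : ∀ w, w ∈ X → plt σ w ∧ plt w τ :=
    fun w hw => hmem w (Set.mem_union_left _ hw)
  have hXclosed : ∀ π w, π ∈ X → plt σ w → plt w τ → (ple π w ∨ ple w π) → w ∈ X := by
    intro π w hπX h1 h2 hcomp
    have hwS : w ∈ X ∪ Y := by rw [hXY]; exact ⟨h1, h2⟩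
    rcases hwS with hw | hw
    · exact hw
    · exfalso
      rcases hcomp with h | h
      · exact (hsep π hπX w hw).1 h
      · exact (hsep π hπX w hw).2 h
  have hzno : ∀ y, y ∈ X → ple (pdsP σ pone) y → False := by
    intro y hyX hzy
    have hyS := hmemX y hyX
    have hlσ := plt_len hyS.1
    have hlτ := plt_len hyS.2
    have hzlen : (pdsP σ pone).1 = σ.1 + 1 := by rw [pdsP_len, pone_len]
    have hzS : plt σ (pdsP σ pone) ∧ plt (pdsP σ pone) τ := by
      refine ⟨⟨ple_pdsP_left σ pone, fun hc => ?_⟩, ⟨ple_trans hzy hyS.2.1, fun hc => ?_⟩⟩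
      · have := ple_len hc; omega
      · have h1 := ple_len hc
        have h2 := ple_len hzy
        omega
    exact hz hzS (hXclosed y _ hyX hzS.1 hzS.2 (Or.inr hzy))
  have himg : ∀ π, π ∈ X ∪ Y → pdsP π α ∈ S' := by
    intro π hπ
    have hπS := hmem π hπ
    refine ⟨⟨pds_mono hπS.1.1 (ple_refl α), fun hc => hπS.1.2 (ple_cancel hc)⟩,
      ⟨pds_mono hπS.2.1 (ple_refl α), fun hc => hπS.2.2 (ple_cancel hc)⟩⟩
  set As : Set PermPt := {ρ | ρ ∈ S' ∧ ∃ π ∈ X, peq ρ (pdsP π α)} with hAs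
  set Bs : Set PermPt := {ρ | ρ ∈ S' ∧ ρ ∉ As} with hBs
  -- the two contradiction engines
  have C2aux : ∀ π ρ ρ1 ρ2, π ∈ X → ρ ∈ S' → (¬ ∃ π' ∈ X, peq ρ (pdsP π' α)) →
      peq ρ (pdsP ρ1 ρ2) → ple ρ1 τ → ple π ρ1 → peq ρ2 α → False := by
    intro π ρ ρ1 ρ2 hπX hρS' hρnA hsplit h1 hπρ1 hρ2α
    by_cases hA : ple τ ρ1
    · exact hρS'.2.2 (ple_trans (pds_mono hA hρ2α.2) hsplit.2)
    by_cases hB : ple ρ1 π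
    · exact hρnA ⟨π, hπX, ⟨ple_trans hsplit.1 (pds_mono hB hρ2α.1),
        ple_trans (pds_mono hπρ1 hρ2α.2) hsplit.2⟩⟩
    · have hρ1S : plt σ ρ1 ∧ plt ρ1 τ := by
        refine ⟨⟨ple_trans (hmemX π hπX).1.1 hπρ1, fun hc => ?_⟩, ⟨h1, hA⟩⟩
        · exact (hmemX π hπX).1.2 (ple_trans hπρ1 hc)
      have hρ1X := hXclosed π ρ1 hπX hρ1S.1 hρ1S.2 (Or.inl hπρ1)
      exact hρnA ⟨ρ1, hρ1X, ⟨ple_trans hsplit.1 (pds_mono (ple_refl _) hρ2α.1),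
        ple_trans (pds_mono (ple_refl _) hρ2α.2) hsplit.2⟩⟩
  have C2 : ∀ π ρ, π ∈ X → ρ ∈ S' → (¬ ∃ π' ∈ X, peq ρ (pdsP π' α)) →
      ple (pdsP π α) ρ → False := by
    intro π ρ hπX hρS' hρnA hle
    obtain ⟨ρ1, ρ2, hsplit, h1, h2⟩ := ple_split hρS'.2.1
    have hle2 : ple (pdsP π α) (pdsP ρ1 ρ2) := ple_trans hle hsplit.1
    rcases ple_pds_split hle2 with ⟨α1, α2, hαpeq, hc1, hc2⟩ | ⟨π1, π2, hπpeq, hc1, hc2⟩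
    · by_cases hα1 : α1.1 = 0
      · have hπρ1 : ple π ρ1 := ple_trans (ple_pdsP_left π α1) hc1
        have hρ2α : peq ρ2 α := ⟨h2,
          ple_trans (ple_trans hαpeq.1 (peq_pdsP_empty_left hα1).1) hc2⟩
        exact C2aux π ρ ρ1 ρ2 hπX hρS' hρnA hsplit h1 hπρ1 hρ2α
      · have hwτ : ple (pdsP π α1) τ := ple_trans hc1 h1
        by_cases hτw : ple τ (pdsP π α1)
        · -- stubborn: ρ1 ≡ τ ≡ π⊕α1
          have hρ1τ : peq ρ1 τ := ⟨h1, ple_trans hτw hc1⟩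
          by_cases hα11 : α1.1 = 1
          · -- absorption
            have lρ : ρ.1 = ρ1.1 + ρ2.1 := by
              have := peq_len hsplit; rw [pdsP_len] at this; exact this
            have lρ1 : ρ1.1 = τ.1 := peq_len hρ1τ
            have lα : α.1 = α1.1 + α2.1 := by
              have := peq_len hαpeq; rw [pdsP_len] at this; exact this
            have hstrict : ρ.1 < τ.1 + α.1 := by
              have := plt_len hρS'.2; rw [pdsP_len] at this; exact this
            have hl2a : α2.1 ≤ ρ2.1 := ple_len hc2
            have hρ2α2 : peq ρ2 α2 := ⟨ple_flip hc2 (by omega), hc2⟩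
            have hρπα : peq ρ (pdsP π α) := by
              constructor
              · refine ple_trans hsplit.1 (ple_trans
                  (pds_mono (ple_trans hρ1τ.1 hτw) hρ2α2.1) (ple_trans
                    (peq_pdsP_assoc π α1 α2).1 (pds_mono (ple_refl π) hαpeq.2)))
              · refine ple_trans (pds_mono (ple_refl π) hαpeq.1) (ple_trans
                  (peq_pdsP_assoc π α1 α2).2 (ple_trans
                    (pds_mono (ple_trans hwτ hρ1τ.2) hc2) hsplit.2))
            exact hρnA ⟨π, hπX, hρπα⟩
          · -- α1.1 ≥ 2
            have hπS := hmemX π hπX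
            have hlσπ := plt_len hπS.1
            have hτα1 : τ.1 = π.1 + α1.1 := by
              have e1 := ple_len hτw
              have e2 := ple_len hwτ
              rw [pdsP_len] at e1 e2
              omega
            have hw1τ : ple (pdsP π pone) τ :=
              ple_trans (pds_mono (ple_refl π) (pone_le (by omega))) hwτ
            have hw1S : plt σ (pdsP π pone) ∧ plt (pdsP π pone) τ := by
              refine ⟨⟨ple_trans hπS.1.1 (ple_pdsP_left π pone), fun hc => ?_⟩,
                ⟨hw1τ, fun hc => ?_⟩⟩
              · have := ple_len hc; rw [pdsP_len, pone_len] at this; omega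
              · have := ple_len hc; rw [pdsP_len, pone_len] at this; omega
            have hw1X := hXclosed π _ hπX hw1S.1 hw1S.2 (Or.inl (ple_pdsP_left π pone))
            exact hzno _ hw1X (pds_mono hπS.1.1 (ple_refl pone))
        · -- non-stubborn
          have hπS := hmemX π hπX
          have hlσπ := plt_len hπS.1
          have hwS : plt σ (pdsP π α1) ∧ plt (pdsP π α1) τ := by
            refine ⟨⟨ple_trans hπS.1.1 (ple_pdsP_left π α1), fun hc => ?_⟩, ⟨hwτ, hτw⟩⟩
            · have := ple_len hc; rw [pdsP_len] at this; omega
          have hwX := hXclosed π _ hπX hwS.1 hwS.2 (Or.inl (ple_pdsP_left π α1))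
          exact hzno _ hwX (pds_mono hπS.1.1 (pone_le (by omega)))
    · -- π splits
      have hπ2 : π2.1 = 0 := by
        have l1 := ple_len hc2
        have l2 := ple_len h2
        rw [pdsP_len] at l1
        omega
      have hπρ1 : ple π ρ1 :=
        ple_trans hπpeq.1 (ple_trans (peq_pdsP_empty_right hπ2).1 hc1)
      have hρ2α : peq ρ2 α := ⟨h2,
        ple_trans (peq_pdsP_empty_left hπ2).2 hc2⟩
      exact C2aux π ρ ρ1 ρ2 hπX hρS' hρnA hsplit h1 hπρ1 hρ2α
  have C1aux : ∀ π ρ ρ1 ρ2, π ∈ X → ρ ∈ S' → (¬ ∃ π' ∈ X, peq ρ (pdsP π' α)) →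
      peq ρ (pdsP ρ1 ρ2) → ple ρ1 π → ple σ ρ1 → peq ρ2 α → False := by
    intro π ρ ρ1 ρ2 hπX hρS' hρnA hsplit h1 hσρ1 hρ2α
    by_cases hA : ple ρ1 σ
    · exact hρS'.1.2 (ple_trans hsplit.1 (pds_mono hA hρ2α.1))
    by_cases hB : ple π ρ1
    · exact hρnA ⟨π, hπX, ⟨ple_trans hsplit.1 (pds_mono h1 hρ2α.1),
        ple_trans (pds_mono hB hρ2α.2) hsplit.2⟩⟩
    · have hπS := hmemX π hπX
      have hρ1S : plt σ ρ1 ∧ plt ρ1 τ := by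
        refine ⟨⟨hσρ1, hA⟩, ⟨ple_trans h1 hπS.2.1, fun hc => hπS.2.2 (ple_trans hc h1)⟩⟩
      have hρ1X := hXclosed π ρ1 hπX hρ1S.1 hρ1S.2 (Or.inr h1)
      exact hρnA ⟨ρ1, hρ1X, ⟨ple_trans hsplit.1 (pds_mono (ple_refl _) hρ2α.1),
        ple_trans (pds_mono (ple_refl _) hρ2α.2) hsplit.2⟩⟩
  have C1 : ∀ π ρ, π ∈ X → ρ ∈ S' → (¬ ∃ π' ∈ X, peq ρ (pdsP π' α)) →
      ple ρ (pdsP π α) → False := by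
    intro π ρ hπX hρS' hρnA hle
    obtain ⟨ρ1, ρ2, hsplit, h1, h2⟩ := ple_split hle
    have hle2 : ple (pdsP σ α) (pdsP ρ1 ρ2) := ple_trans hρS'.1.1 hsplit.1
    rcases ple_pds_split hle2 with ⟨α1, α2, hαpeq, hc1, hc2⟩ | ⟨σ1, σ2, hσpeq, hc1, hc2⟩
    · by_cases hα1 : α1.1 = 0
      · have hσρ1 : ple σ ρ1 := ple_trans (ple_pdsP_left σ α1) hc1
        have hρ2α : peq ρ2 α := ⟨h2,
          ple_trans (ple_trans hαpeq.1 (peq_pdsP_empty_left hα1).1) hc2⟩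
        exact C1aux π ρ ρ1 ρ2 hπX hρS' hρnA hsplit h1 hσρ1 hρ2α
      · -- anchor: z ≤ σ⊕α1 ≤ ρ1 ≤ π
        have hzπ : ple (pdsP σ pone) π :=
          ple_trans (pds_mono (ple_refl σ) (pone_le (by omega)))
            (ple_trans hc1 h1)
        exact hzno π hπX hzπ
    · have hσ2 : σ2.1 = 0 := by
        have l1 := ple_len hc2
        have l2 := ple_len h2
        rw [pdsP_len] at l1
        omega
      have hσρ1 : ple σ ρ1 :=
        ple_trans hσpeq.1 (ple_trans (peq_pdsP_empty_right hσ2).1 hc1)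
      have hρ2α : peq ρ2 α := ⟨h2, ple_trans (peq_pdsP_empty_left hσ2).2 hc2⟩
      exact C1aux π ρ ρ1 ρ2 hπX hρS' hρnA hsplit h1 hσρ1 hρ2α
  -- assemble the disconnection
  refine ⟨As, Bs, ?_, ?_, ?_, ?_⟩
  · apply Set.eq_of_subset_of_subset
    · rintro ρ (hρ | hρ)
      · exact hρ.1
      · exact hρ.1
    · intro ρ hρ
      by_cases h : ρ ∈ As
      · exact Set.mem_union_left _ h
      · exact Set.mem_union_right _ ⟨hρ, h⟩
  · obtain ⟨π0, hπ0⟩ := hX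
    exact ⟨pdsP π0 α, himg π0 (Set.mem_union_left _ hπ0), π0, hπ0, peq_refl _⟩
  · obtain ⟨π1, hπ1⟩ := hY
    refine ⟨pdsP π1 α, himg π1 (Set.mem_union_right _ hπ1), ?_⟩
    rintro ⟨-, π, hπX, hpeq⟩
    exact (hsep π hπX π1 hπ1).2 (ple_cancel hpeq.1)
  · rintro x ⟨hxS', π, hπX, hxpeq⟩ y ⟨hyS', hynA⟩
    have hynA' : ¬ ∃ π' ∈ X, peq y (pdsP π' α) := by
      intro ⟨π', hπ', hp⟩
      exact hynA ⟨hyS', π', hπ', hp⟩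
    constructor
    · intro hle
      exact C2 π y hπX hyS' hynA' (ple_trans hxpeq.2 hle)
    · intro hle
      exact C1 π y hπX hyS' hynA' (ple_trans hle hxpeq.1)

end CoreAux

lemma core_ds_right (σ τ α : PermPt)
    (h : Disconn {π | plt σ π ∧ plt π τ}) :
    Disconn {π | plt (pdsP σ α) π ∧ plt π (pdsP τ α)} := by
  classical
  obtain ⟨A, B, hAB, hA, hB, hsep⟩ := h
  by_cases hzA : pdsP σ pone ∈ A
  · exact core_aux σ τ α B A (by rw [Set.union_comm]; exact hAB) hB hA
      (fun x hx y hy => ⟨(hsep y hy x hx).2, (hsep y hy x hx).1⟩)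
      (fun _ hzB => (hsep _ hzA _ hzB).1 (ple_refl _))
  · exact core_aux σ τ α A B hAB hA hB hsep (fun _ hzA' => hzA hzA')

-- ### complement and reverse symmetries

lemma val_congr {n : ℕ} (p : Equiv.Perm (Fin n)) (i j : Fin n) (h : (i:ℕ) = (j:ℕ)) :
    ((p i : Fin n) : ℕ) = ((p j : Fin n) : ℕ) := by
  rw [Fin.ext h]

def cP (a : PermPt) : PermPt := ⟨a.1, a.2.trans Fin.revPerm⟩
def rP (a : PermPt) : PermPt := ⟨a.1, Fin.revPerm.trans a.2⟩

lemma cP_len (a : PermPt) : (cP a).1 = a.1 := rfl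
lemma rP_len (a : PermPt) : (rP a).1 = a.1 := rfl

lemma cP_val {a : PermPt} {i : ℕ} (h : i < a.1) :
    pval (cP a) i = a.1 - 1 - pval a i := by
  show (if h' : i < (cP a).1 then (((cP a).2 ⟨i, h'⟩ : Fin (cP a).1) : ℕ) else (cP a).1) = _
  rw [dif_pos (show i < (cP a).1 from h)]
  show ((Fin.rev (a.2 ⟨i, h⟩) : Fin a.1) : ℕ) = _
  rw [Fin.val_rev]
  simp only [pval, dif_pos h]
  omega

lemma rP_val {a : PermPt} {i : ℕ} (h : i < a.1) :
    pval (rP a) i = pval a (a.1 - 1 - i) := by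
  show (if h' : i < (rP a).1 then (((rP a).2 ⟨i, h'⟩ : Fin (rP a).1) : ℕ) else (rP a).1) = _
  rw [dif_pos (show i < (rP a).1 from h)]
  show ((a.2 (Fin.rev ⟨i, h⟩) : Fin a.1) : ℕ) = _
  rw [pval, dif_pos (show a.1 - 1 - i < a.1 by omega)]
  exact val_congr a.2 _ _ (by rw [Fin.val_rev]; show a.1 - (i+1) = a.1 - 1 - i; omega)

lemma ple_cP {a b : PermPt} (h : ple a b) : ple (cP a) (cP b) := by
  obtain ⟨f, hf, hc⟩ := h
  refine ⟨f, hf, ?_⟩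
  intro i j
  show Fin.rev (a.2 i) ≤ Fin.rev (a.2 j) ↔ Fin.rev (b.2 (f i)) ≤ Fin.rev (b.2 (f j))
  rw [Fin.rev_le_rev, Fin.rev_le_rev]
  exact hc j i

lemma ple_rP {a b : PermPt} (h : ple a b) : ple (rP a) (rP b) := by
  obtain ⟨f, hf, hc⟩ := h
  refine ⟨fun i => Fin.rev (f (Fin.rev i)), ?_, ?_⟩
  · intro i j hij
    exact Fin.rev_lt_rev.mpr (hf (Fin.rev_lt_rev.mpr hij))
  · intro i j
    show a.2 (Fin.rev i) ≤ a.2 (Fin.rev j) ↔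
      b.2 (Fin.rev (Fin.rev (f (Fin.rev i)))) ≤ b.2 (Fin.rev (Fin.rev (f (Fin.rev j))))
    rw [Fin.rev_rev, Fin.rev_rev]
    exact hc (Fin.rev i) (Fin.rev j)

lemma cP_invol (a : PermPt) : cP (cP a) = a := by
  rcases a with ⟨n, e⟩
  show (⟨n, (e.trans Fin.revPerm).trans Fin.revPerm⟩ : PermPt) = ⟨n, e⟩
  congr 1
  exact Equiv.ext fun x => Fin.rev_rev _

lemma rP_invol (a : PermPt) : rP (rP a) = a := by
  rcases a with ⟨n, e⟩
  show (⟨n, Fin.revPerm.trans (Fin.revPerm.trans e)⟩ : PermPt) = ⟨n, e⟩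
  congr 1
  exact Equiv.ext fun x => by
    show e (Fin.rev (Fin.rev x)) = e x
    rw [Fin.rev_rev]

lemma ple_cP_iff {a b : PermPt} : ple (cP a) (cP b) ↔ ple a b :=
  ⟨fun h => by have := ple_cP h; rwa [cP_invol, cP_invol] at this, ple_cP⟩

lemma ple_rP_iff {a b : PermPt} : ple (rP a) (rP b) ↔ ple a b :=
  ⟨fun h => by have := ple_rP h; rwa [rP_invol, rP_invol] at this, ple_rP⟩

lemma peq_cP_pdsP (a b : PermPt) : peq (cP (pdsP a b)) (pssP (cP a) (cP b)) := by
  have hlen : (cP (pdsP a b)).1 = (pssP (cP a) (cP b)).1 := rfl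
  refine peq_of_pval hlen ?_
  intro i hi
  rw [cP_len, pdsP_len] at hi
  rw [cP_val (show i < (pdsP a b).1 by rw [pdsP_len]; omega), pdsP_len]
  by_cases h : i < a.1
  · rw [pval_pdsP_lo h, pval_pssP_lo (show i < (cP a).1 from h), cP_val h]
    have := pval_lt (a := a) h
    rw [cP_len]
    omega
  · rw [pval_pdsP_hi (by omega) (by omega),
      pval_pssP_hi (show (cP a).1 ≤ i from by rw [cP_len]; omega)
        (show i < (cP a).1 + (cP b).1 from by rw [cP_len, cP_len]; omega),
      cP_len, cP_val (show i - a.1 < b.1 by omega)]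
    have := pval_lt (a := b) (show i - a.1 < b.1 by omega)
    omega

lemma peq_rP_pssP (a b : PermPt) : peq (rP (pssP a b)) (pdsP (rP b) (rP a)) := by
  have hlen : (rP (pssP a b)).1 = (pdsP (rP b) (rP a)).1 := by
    rw [rP_len, pdsP_len, rP_len, rP_len]
    show a.1 + b.1 = b.1 + a.1
    omega
  refine peq_of_pval hlen ?_
  intro i hi
  rw [rP_len] at hi
  have hi' : i < a.1 + b.1 := hi
  rw [rP_val (show i < (pssP a b).1 from hi)]
  show pval (pssP a b) ((pssP a b).1 - 1 - i) = _
  have hN : (pssP a b).1 = a.1 + b.1 := rfl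
  rw [hN]
  by_cases h : i < b.1
  · rw [pval_pssP_hi (show a.1 ≤ a.1 + b.1 - 1 - i by omega) (by omega),
      pval_pdsP_lo (show i < (rP b).1 from h), rP_val (show i < b.1 from h)]
    have e : a.1 + b.1 - 1 - i - a.1 = b.1 - 1 - i := by omega
    rw [e]
  · rw [pval_pssP_lo (show a.1 + b.1 - 1 - i < a.1 by omega),
      pval_pdsP_hi (show (rP b).1 ≤ i from by rw [rP_len]; omega)
        (show i < (rP b).1 + (rP a).1 from by rw [rP_len, rP_len]; omega),
      rP_len, rP_val (show i - b.1 < a.1 by omega)]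
    have e : a.1 + b.1 - 1 - i = a.1 - 1 - (i - b.1) := by omega
    rw [e]

-- ### transport of disconnectedness

lemma plt_iff_of_iso {g : PermPt → PermPt} (hg : ∀ a b, ple (g a) (g b) ↔ ple a b)
    {a b : PermPt} : plt (g a) (g b) ↔ plt a b := by
  unfold plt
  rw [hg, hg]

lemma disconn_image {g : PermPt → PermPt} (hg : ∀ a b, ple (g a) (g b) ↔ ple a b)
    {S : Set PermPt} (h : Disconn S) : Disconn (g '' S) := by
  obtain ⟨A, B, hAB, hA, hB, hsep⟩ := h
  refine ⟨g '' A, g '' B, by rw [← Set.image_union, hAB], hA.image g, hB.image g, ?_⟩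
  rintro x ⟨a, ha, rfl⟩ y ⟨b, hb, rfl⟩
  constructor
  · intro hc; exact (hsep a ha b hb).1 ((hg a b).mp hc)
  · intro hc; exact (hsep a ha b hb).2 ((hg b a).mp hc)

lemma image_interval {g : PermPt → PermPt} (hg : ∀ a b, ple (g a) (g b) ↔ ple a b)
    (hinv : ∀ a, g (g a) = a) (L M : PermPt) :
    g '' {π | plt L π ∧ plt π M} = {π | plt (g L) π ∧ plt π (g M)} := by
  ext ρ
  constructor
  · rintro ⟨π, ⟨h1, h2⟩, rfl⟩
    exact ⟨(plt_iff_of_iso hg).mpr h1, (plt_iff_of_iso hg).mpr h2⟩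
  · rintro ⟨h1, h2⟩
    refine ⟨g ρ, ⟨?_, ?_⟩, hinv ρ⟩
    · have : plt (g L) (g (g ρ)) := by rw [hinv]; exact h1
      exact (plt_iff_of_iso hg).mp this
    · have : plt (g (g ρ)) (g M) := by rw [hinv]; exact h2
      exact (plt_iff_of_iso hg).mp this

lemma interval_congr {L L' M M' : PermPt} (h1 : peq L L') (h2 : peq M M') :
    {π | plt L π ∧ plt π M} = {π | plt L' π ∧ plt π M'} := by
  ext ρ
  constructor
  · rintro ⟨⟨ha, hb⟩, ⟨hc, hd⟩⟩
    exact ⟨⟨ple_trans h1.2 ha, fun hx => hb (ple_trans hx h1.2)⟩,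
      ⟨ple_trans hc h2.1, fun hx => hd (ple_trans h2.1 hx)⟩⟩
  · rintro ⟨⟨ha, hb⟩, ⟨hc, hd⟩⟩
    exact ⟨⟨ple_trans h1.1 ha, fun hx => hb (ple_trans hx h1.1)⟩,
      ⟨ple_trans hc h2.2, fun hx => hd (ple_trans h2.2 hx)⟩⟩

-- ### the three other augmentations

lemma core_ss_right (σ τ α : PermPt)
    (h : Disconn {π | plt σ π ∧ plt π τ}) :
    Disconn {π | plt (pssP σ α) π ∧ plt π (pssP τ α)} := by
  have h1 : Disconn {π | plt (cP σ) π ∧ plt π (cP τ)} := by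
    rw [← image_interval (fun a b => ple_cP_iff) cP_invol]
    exact disconn_image (fun a b => ple_cP_iff) h
  have h2 := core_ds_right (cP σ) (cP τ) (cP α) h1
  have h3 : Disconn {π | plt (cP (pdsP (cP σ) (cP α))) π ∧
      plt π (cP (pdsP (cP τ) (cP α)))} := by
    rw [← image_interval (fun a b => ple_cP_iff) cP_invol]
    exact disconn_image (fun a b => ple_cP_iff) h2
  have e1 : peq (cP (pdsP (cP σ) (cP α))) (pssP σ α) := by
    have := peq_cP_pdsP (cP σ) (cP α)
    rwa [cP_invol, cP_invol] at this
  have e2 : peq (cP (pdsP (cP τ) (cP α))) (pssP τ α) := by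
    have := peq_cP_pdsP (cP τ) (cP α)
    rwa [cP_invol, cP_invol] at this
  rwa [interval_congr e1 e2] at h3

lemma core_ds_left (σ τ α : PermPt)
    (h : Disconn {π | plt σ π ∧ plt π τ}) :
    Disconn {π | plt (pdsP α σ) π ∧ plt π (pdsP α τ)} := by
  have h1 : Disconn {π | plt (rP σ) π ∧ plt π (rP τ)} := by
    rw [← image_interval (fun a b => ple_rP_iff) rP_invol]
    exact disconn_image (fun a b => ple_rP_iff) h
  have h2 := core_ss_right (rP σ) (rP τ) (rP α) h1
  have h3 : Disconn {π | plt (rP (pssP (rP σ) (rP α))) π ∧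
      plt π (rP (pssP (rP τ) (rP α)))} := by
    rw [← image_interval (fun a b => ple_rP_iff) rP_invol]
    exact disconn_image (fun a b => ple_rP_iff) h2
  have e1 : peq (rP (pssP (rP σ) (rP α))) (pdsP α σ) := by
    have := peq_rP_pssP (rP σ) (rP α)
    rwa [rP_invol, rP_invol] at this
  have e2 : peq (rP (pssP (rP τ) (rP α))) (pdsP α τ) := by
    have := peq_rP_pssP (rP τ) (rP α)
    rwa [rP_invol, rP_invol] at this
  rwa [interval_congr e1 e2] at h3

lemma core_ss_left (σ τ α : PermPt)
    (h : Disconn {π | plt σ π ∧ plt π τ}) :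
    Disconn {π | plt (pssP α σ) π ∧ plt π (pssP α τ)} := by
  have h1 : Disconn {π | plt (cP σ) π ∧ plt π (cP τ)} := by
    rw [← image_interval (fun a b => ple_cP_iff) cP_invol]
    exact disconn_image (fun a b => ple_cP_iff) h
  have h2 := core_ds_left (cP σ) (cP τ) (cP α) h1
  have h3 : Disconn {π | plt (cP (pdsP (cP α) (cP σ))) π ∧
      plt π (cP (pdsP (cP α) (cP τ)))} := by
    rw [← image_interval (fun a b => ple_cP_iff) cP_invol]
    exact disconn_image (fun a b => ple_cP_iff) h2
  have e1 : peq (cP (pdsP (cP α) (cP σ))) (pssP α σ) := by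
    have := peq_cP_pdsP (cP α) (cP σ)
    rwa [cP_invol, cP_invol] at this
  have e2 : peq (cP (pdsP (cP α) (cP τ))) (pssP α τ) := by
    have := peq_cP_pdsP (cP α) (cP τ)
    rwa [cP_invol, cP_invol] at this
  rwa [interval_congr e1 e2] at h3


/-- If `(σ,τ)` is disconnected, then for any permutation `α` all four
augmented intervals `(α⊕σ, α⊕τ)`, `(α⊖σ, α⊖τ)`, `(σ⊕α, τ⊕α)` and
`(σ⊖α, τ⊖α)` are disconnected. -/
theorem disconn_of_four_augmentations (σ τ : PermPt)
    (h : Disconn {π | plt σ π ∧ plt π τ}) (α : PermPt) :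
    Disconn {π | plt (pdsP α σ) π ∧ plt π (pdsP α τ)} ∧
    Disconn {π | plt (pssP α σ) π ∧ plt π (pssP α τ)} ∧
    Disconn {π | plt (pdsP σ α) π ∧ plt π (pdsP τ α)} ∧
    Disconn {π | plt (pssP σ α) π ∧ plt π (pssP τ α)} :=
  ⟨core_ds_left σ τ α h, core_ss_left σ τ α h,
    core_ds_right σ τ α h, core_ss_right σ τ α h⟩
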